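/- For each n ≥ 1, the number of super friendly p-watermelons of length n equals the number of vicious p-watermelons of length n. -/
import Mathlib


/-- A directed walk of length `n`, encoded by its ordinates, frozen after time `n`. -/
def IsWalkTo (n : ℕ) (y : ℕ → ℤ) : Prop :=
  (∀ t < n, y (t + 1) = y t + 1 ∨ y (t + 1) = y t - 1) ∧ (∀ t, n ≤ t → y t = y n)

/-- A vicious `p`-watermelon of length `n`: walks start at heights `0,2,…,2(p-1)`,
end at heights `c, c+2, …, c+2(p-1)` for some `c`, with strict ordering at every time. -/
def Vicious (p n : ℕ) (y : Fin p → ℕ → ℤ) : Prop :=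
  (∀ k, IsWalkTo n (y k)) ∧
  (∀ k : Fin p, y k 0 = 2 * ((k : ℕ) : ℤ)) ∧
  (∃ c : ℤ, ∀ k : Fin p, y k n = c + 2 * ((k : ℕ) : ℤ)) ∧
  (∀ t ≤ n, ∀ j k : Fin p, j < k → y j t < y k t)

/-- A super friendly `p`-watermelon of length `n`: all walks start at the origin,
all end at the same point, with weak ordering at every time. -/
def SuperFriendly (p n : ℕ) (y : Fin p → ℕ → ℤ) : Prop :=
  (∀ k, IsWalkTo n (y k)) ∧
  (∀ k, y k 0 = 0) ∧
  (∀ j k : Fin p, y j n = y k n) ∧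
  (∀ t ≤ n, ∀ j k : Fin p, j ≤ k → y j t ≤ y k t)

lemma walk_shift {n : ℕ} {y : ℕ → ℤ} (c : ℤ) (h : IsWalkTo n y) :
    IsWalkTo n (fun t => y t + c) := by
  refine ⟨fun t ht => ?_, fun t ht => by simp [h.2 t ht]⟩
  dsimp only
  rcases h.1 t ht with h' | h'
  · left; omega
  · right; omega

lemma walk_parity {n : ℕ} {y : ℕ → ℤ} (h : IsWalkTo n y) :
    ∀ t ≤ n, ∃ m : ℤ, y t - y 0 - t = 2 * m := by
  intro t
  induction t with
  | zero => exact fun _ => ⟨0, by simp⟩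
  | succ t ih =>
    intro ht
    obtain ⟨m, hm⟩ := ih (by omega)
    rcases h.1 t (by omega) with h' | h'
    · exact ⟨m, by push_cast; omega⟩
    · exact ⟨m - 1, by push_cast; omega⟩

lemma vicious_gap {p n : ℕ} {y : Fin p → ℕ → ℤ} (hy : Vicious p n y)
    {t : ℕ} (ht : t ≤ n) :
    ∀ (d : ℕ) (j k : Fin p), (k : ℕ) = (j : ℕ) + d → y j t + 2 * d ≤ y k t := by
  intro d
  induction d with
  | zero =>
    intro j k h
    have : j = k := Fin.ext (by omega)
    subst this; simp
  | succ d ih =>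
    intro j k h
    have hk := k.isLt
    have hm : (j : ℕ) + d < p := by omega
    set m : Fin p := ⟨(j : ℕ) + d, hm⟩ with hmdef
    have h1 : y j t + 2 * d ≤ y m t := ih j m rfl
    have h2 : y m t < y k t := hy.2.2.2 t ht m k (by simp [Fin.lt_def, hmdef]; omega)
    obtain ⟨a, ha⟩ := walk_parity (hy.1 m) t ht
    obtain ⟨b, hb⟩ := walk_parity (hy.1 k) t ht
    have hm0 := hy.2.1 m
    have hk0 := hy.2.1 k
    rw [hm0] at ha
    rw [hk0] at hb
    push_cast at ha hb ⊢
    omega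

theorem superFriendly_card_eq_vicious_card (p n : ℕ) (hn : 1 ≤ n) :
    Nat.card {y : Fin p → ℕ → ℤ // SuperFriendly p n y} =
      Nat.card {y : Fin p → ℕ → ℤ // Vicious p n y} := by
  refine Nat.card_congr ⟨?_, ?_, ?_, ?_⟩
  · -- friendly to vicious
    rintro ⟨y, hy⟩
    refine ⟨fun k t => y k t + 2 * ((k : ℕ) : ℤ), ?_, ?_, ?_, ?_⟩
    · exact fun k => walk_shift _ (hy.1 k)
    · intro k; simp [hy.2.1 k]
    · rcases Nat.eq_zero_or_pos p with hp | hp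
      · subst hp; exact ⟨0, fun k => k.elim0⟩
      · exact ⟨y ⟨0, hp⟩ n, fun k => by dsimp only; rw [hy.2.2.1 k ⟨0, hp⟩]⟩
    · intro t ht j k hjk
      dsimp only
      have h1 := hy.2.2.2 t ht j k (le_of_lt hjk)
      have h2 : (j : ℕ) < (k : ℕ) := hjk
      have : ((j : ℕ) : ℤ) < ((k : ℕ) : ℤ) := by exact_mod_cast h2
      omega
  · -- vicious to friendly
    rintro ⟨y, hy⟩
    refine ⟨fun k t => y k t - 2 * ((k : ℕ) : ℤ), ?_, ?_, ?_, ?_⟩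
    · exact fun k => by
        have := walk_shift (-(2 * ((k : ℕ) : ℤ))) (hy.1 k)
        simpa [sub_eq_add_neg] using this
    · intro k; simp [hy.2.1 k]
    · obtain ⟨c, hc⟩ := hy.2.2.1
      intro j k; dsimp only; rw [hc j, hc k]; ring
    · intro t ht j k hjk
      dsimp only
      have h2 : (j : ℕ) ≤ (k : ℕ) := hjk
      have := vicious_gap hy ht ((k : ℕ) - (j : ℕ)) j k (by omega)
      have hc : (((k : ℕ) - (j : ℕ) : ℕ) : ℤ) = ((k : ℕ) : ℤ) - ((j : ℕ) : ℤ) := by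
        push_cast [h2]; ring
      rw [hc] at this
      omega
  · rintro ⟨y, hy⟩
    apply Subtype.ext
    funext k t
    simp
  · rintro ⟨y, hy⟩
    apply Subtype.ext
    funext k t
    simp
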